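/- arXiv:math/0506335 — 2 statements merged into one kernel-verified Lean document; each statement's English description precedes it below -/
import Mathlib

section
/- For any positive integer s, the factorial elementary and complete homogeneous functions in p variables satisfy Σ_{r=0}^{p} (−1)^r e_r(x|a) h_{s−r}(x | τ^{1−s}a) = 0. -/
open Finset
open scoped Classical

noncomputable section

variable {R : Type*} [CommRing R]

/-- shifted sequence: `(τ^s a)_n = a_{n+s}` -/
def shiftSeq (a : ℤ → R) (s : ℤ) : ℤ → R := fun n => a (n + s)

/-- factorial complete homogeneous function `h_k(x|a)`
    (`= Σ_{1≤i_1≤...≤i_k≤p} ∏_r (x_{i_r} - a_{i_r + r - 1})`, `0` for `k < 0`) -/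
def fh (p : ℕ) (x : Fin p → R) (a : ℤ → R) (k : ℤ) : R :=
  if 0 ≤ k then
    ∑ f ∈ Finset.univ.filter (fun f : Fin k.toNat → Fin p => Monotone f),
      ∏ r : Fin k.toNat, (x (f r) - a (((f r : ℕ) : ℤ) + ((r : ℕ) : ℤ) + 1))
  else 0

/-- factorial elementary function `e_k(x|a)`
    (`= Σ_{1≤i_1<...<i_k≤p} ∏_r (x_{i_r} - a_{i_r - r + 1})`, `0` for `k < 0`;
    it vanishes automatically for `k > p`) -/
def fe (p : ℕ) (x : Fin p → R) (a : ℤ → R) (k : ℤ) : R :=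
  if 0 ≤ k then
    ∑ f ∈ Finset.univ.filter (fun f : Fin k.toNat → Fin p => StrictMono f),
      ∏ r : Fin k.toNat, (x (f r) - a (((f r : ℕ) : ℤ) - ((r : ℕ) : ℤ) + 1))
  else 0

/-- generalized factorial power `(y|a)^k = (y - a_1)⋯(y - a_k)` -/
def gfp (y : R) (a : ℤ → R) (k : ℕ) : R :=
  ∏ i ∈ Finset.range k, (y - a ((i : ℤ) + 1))

/-- the factorial Schur polynomial `s_λ(x|a)`, defined through the factorial
    Jacobi-Trudi determinant `det( h_{λ_i - i + j}(x | τ^{1-j} a) )_{1≤i,j≤p}` -/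
def fschur (p : ℕ) (lam : Fin p → ℕ) (x : Fin p → R) (a : ℤ → R) : R :=
  Matrix.det (Matrix.of fun i j : Fin p =>
    fh p x (shiftSeq a (-((j : ℕ) : ℤ))) (((lam i : ℕ) : ℤ) - ((i : ℕ) : ℤ) + ((j : ℕ) : ℤ)))

/-! ### Auxiliary material for the proof -/

/-- nat-indexed version of `fh` -/
def fhS (p k : ℕ) (x : Fin p → R) (a : ℤ → R) : R :=
  ∑ f ∈ Finset.univ.filter (fun f : Fin k → Fin p => Monotone f),
    ∏ r : Fin k, (x (f r) - a (((f r : ℕ) : ℤ) + ((r : ℕ) : ℤ) + 1))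

/-- nat-indexed version of `fe` -/
def feS (p k : ℕ) (x : Fin p → R) (a : ℤ → R) : R :=
  ∑ f ∈ Finset.univ.filter (fun f : Fin k → Fin p => StrictMono f),
    ∏ r : Fin k, (x (f r) - a (((f r : ℕ) : ℤ) - ((r : ℕ) : ℤ) + 1))

lemma fh_natCast (p k : ℕ) (x : Fin p → R) (a : ℤ → R) :
    fh p x a (k : ℤ) = fhS p k x a := by
  rw [fh, if_pos (Int.natCast_nonneg k)]; rfl

lemma fe_natCast (p k : ℕ) (x : Fin p → R) (a : ℤ → R) :
    fe p x a (k : ℤ) = feS p k x a := by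
  rw [fe, if_pos (Int.natCast_nonneg k)]; rfl

lemma fh_neg (p : ℕ) (x : Fin p → R) (a : ℤ → R) {k : ℤ} (hk : k < 0) :
    fh p x a k = 0 := by rw [fh, if_neg (not_le.mpr hk)]

lemma fe_neg (p : ℕ) (x : Fin p → R) (a : ℤ → R) {k : ℤ} (hk : k < 0) :
    fe p x a k = 0 := by rw [fe, if_neg (not_le.mpr hk)]

lemma fhS_zero (p : ℕ) (x : Fin p → R) (a : ℤ → R) : fhS p 0 x a = 1 := by
  rw [fhS, Finset.filter_true_of_mem (fun f _ => Subsingleton.monotone f)]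
  simp

lemma feS_zero (p : ℕ) (x : Fin p → R) (a : ℤ → R) : feS p 0 x a = 1 := by
  rw [feS, Finset.filter_true_of_mem (fun f _ => Subsingleton.strictMono f)]
  simp

lemma fhS_nil (m : ℕ) (x : Fin 0 → R) (a : ℤ → R) : fhS 0 (m + 1) x a = 0 := by
  haveI : IsEmpty (Fin (m + 1) → Fin 0) := ⟨fun f => (f 0).elim0⟩
  rw [fhS, Finset.univ_eq_empty, Finset.filter_empty, Finset.sum_empty]

lemma feS_large {p k : ℕ} (h : p < k) (x : Fin p → R) (a : ℤ → R) : feS p k x a = 0 := by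
  rw [feS]
  convert Finset.sum_empty
  rw [Finset.filter_eq_empty_iff]
  intro f _ hf
  have := Fintype.card_le_of_injective f hf.injective
  simp only [Fintype.card_fin] at this
  omega

lemma snoc_monotone {m p : ℕ} {g : Fin m → Fin (p + 1)} (hg : Monotone g) :
    Monotone (Fin.snoc g (Fin.last p) : Fin (m + 1) → Fin (p + 1)) := by
  intro u v huv
  induction v using Fin.lastCases with
  | last =>
    rw [Fin.snoc_last]
    induction u using Fin.lastCases with
    | last => rw [Fin.snoc_last]
    | cast u' => rw [Fin.snoc_castSucc]; exact Fin.le_last _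
  | cast v' =>
    have hu : u ≠ Fin.last m := by
      intro h; subst h
      exact absurd (lt_of_le_of_lt huv (Fin.castSucc_lt_last v')) (lt_irrefl _)
    obtain ⟨u', rfl⟩ := Fin.exists_castSucc_eq.mpr hu
    rw [Fin.snoc_castSucc, Fin.snoc_castSucc]
    exact hg (Fin.castSucc_le_castSucc_iff.mp huv)

lemma snoc_strictMono {m p : ℕ} {g : Fin m → Fin p} (hg : StrictMono g) :
    StrictMono
      (Fin.snoc (Fin.castSucc ∘ g) (Fin.last p) : Fin (m + 1) → Fin (p + 1)) := by
  intro u v huv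
  induction v using Fin.lastCases with
  | last =>
    have hu : u ≠ Fin.last m := huv.ne
    obtain ⟨u', rfl⟩ := Fin.exists_castSucc_eq.mpr hu
    rw [Fin.snoc_last, Fin.snoc_castSucc]
    exact Fin.castSucc_lt_last _
  | cast v' =>
    have hu : u ≠ Fin.last m := by
      intro h; subst h
      exact absurd (lt_trans huv (Fin.castSucc_lt_last v')) (lt_irrefl _)
    obtain ⟨u', rfl⟩ := Fin.exists_castSucc_eq.mpr hu
    rw [Fin.snoc_castSucc, Fin.snoc_castSucc]
    exact Fin.castSucc_lt_castSucc_iff.mpr (hg (Fin.castSucc_lt_castSucc_iff.mp huv))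

lemma fhS_succ (p m : ℕ) (x : Fin (p + 1) → R) (b : ℤ → R) :
    fhS (p + 1) (m + 1) x b =
      fhS p (m + 1) (x ∘ Fin.castSucc) b
        + (x (Fin.last p) - b ((p : ℤ) + (m : ℤ) + 1)) * fhS (p + 1) m x b := by
  classical
  rw [fhS, ← Finset.sum_filter_add_sum_filter_not _
    (fun f : Fin (m + 1) → Fin (p + 1) => f (Fin.last m) = Fin.last p)]
  have h2 : ∑ f ∈ (Finset.univ.filter
        (fun f : Fin (m + 1) → Fin (p + 1) => Monotone f)).filter
        (fun f => f (Fin.last m) = Fin.last p),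
      ∏ r : Fin (m + 1), (x (f r) - b (((f r : ℕ) : ℤ) + ((r : ℕ) : ℤ) + 1))
      = (x (Fin.last p) - b ((p : ℤ) + (m : ℤ) + 1)) * fhS (p + 1) m x b := by
    rw [fhS, Finset.mul_sum]
    refine Finset.sum_bij' (fun f _ => f ∘ Fin.castSucc)
      (fun g _ => Fin.snoc g (Fin.last p)) ?_ ?_ ?_ ?_ ?_
    · intro f hf
      simp only [Finset.mem_filter, Finset.mem_univ, true_and] at hf ⊢
      exact hf.1.comp Fin.strictMono_castSucc.monotone
    · intro g hg
      simp only [Finset.mem_filter, Finset.mem_univ, true_and] at hg ⊢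
      exact ⟨snoc_monotone hg, Fin.snoc_last _ _⟩
    · intro f hf
      simp only [Finset.mem_filter, Finset.mem_univ, true_and] at hf
      funext u
      induction u using Fin.lastCases with
      | last => simp [hf.2]
      | cast u' => simp
    · intro g hg
      funext u
      simp
    · intro f hf
      simp only [Finset.mem_filter, Finset.mem_univ, true_and] at hf
      rw [Fin.prod_univ_castSucc, mul_comm]
      have hl : x (f (Fin.last m)) -
            b (((f (Fin.last m) : ℕ) : ℤ) + ((Fin.last m : ℕ) : ℤ) + 1)
          = x (Fin.last p) - b ((p : ℤ) + (m : ℤ) + 1) := by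
        rw [hf.2]; simp [Fin.val_last]
      rw [hl]
      congr 1
  have h1 : ∑ f ∈ (Finset.univ.filter
        (fun f : Fin (m + 1) → Fin (p + 1) => Monotone f)).filter
        (fun f => ¬ f (Fin.last m) = Fin.last p),
      ∏ r : Fin (m + 1), (x (f r) - b (((f r : ℕ) : ℤ) + ((r : ℕ) : ℤ) + 1))
      = fhS p (m + 1) (x ∘ Fin.castSucc) b := by
    rw [fhS]
    have key : ∀ f : Fin (m + 1) → Fin (p + 1), Monotone f →
        ¬ f (Fin.last m) = Fin.last p → ∀ r, f r ≠ Fin.last p := by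
      intro f hf hlast r
      exact ne_of_lt (lt_of_le_of_lt (hf (Fin.le_last r))
        (lt_of_le_of_ne (Fin.le_last _) hlast))
    refine Finset.sum_bij'
      (fun f hf => fun r => (f r).castPred ?_)
      (fun g _ => Fin.castSucc ∘ g) ?_ ?_ ?_ ?_ ?_
    · simp only [Finset.mem_filter, Finset.mem_univ, true_and] at hf
      exact key f hf.1 hf.2 r
    · intro f hf
      simp only [Finset.mem_filter, Finset.mem_univ, true_and] at hf ⊢
      exact Fin.monotone_castPred_comp _ hf.1
    · intro g hg
      simp only [Finset.mem_filter, Finset.mem_univ, true_and] at hg ⊢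
      exact ⟨Fin.strictMono_castSucc.monotone.comp hg, (Fin.castSucc_lt_last _).ne⟩
    · intro f hf
      funext u
      simp [Fin.castSucc_castPred]
    · intro g hg
      funext u
      simp [Fin.castPred_castSucc]
    · intro f hf
      apply Finset.prod_congr rfl
      intro r _
      simp [Fin.coe_castPred]
  rw [h1, h2]
  ring

lemma feS_succ (p m : ℕ) (x : Fin (p + 1) → R) (a : ℤ → R) :
    feS (p + 1) (m + 1) x a =
      feS p (m + 1) (x ∘ Fin.castSucc) a
        + (x (Fin.last p) - a ((p : ℤ) - (m : ℤ) + 1)) * feS p m (x ∘ Fin.castSucc) a := by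
  classical
  rw [feS, ← Finset.sum_filter_add_sum_filter_not _
    (fun f : Fin (m + 1) → Fin (p + 1) => f (Fin.last m) = Fin.last p)]
  have h2 : ∑ f ∈ (Finset.univ.filter
        (fun f : Fin (m + 1) → Fin (p + 1) => StrictMono f)).filter
        (fun f => f (Fin.last m) = Fin.last p),
      ∏ r : Fin (m + 1), (x (f r) - a (((f r : ℕ) : ℤ) - ((r : ℕ) : ℤ) + 1))
      = (x (Fin.last p) - a ((p : ℤ) - (m : ℤ) + 1)) * feS p m (x ∘ Fin.castSucc) a := by
    rw [feS, Finset.mul_sum]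
    have key : ∀ f : Fin (m + 1) → Fin (p + 1), StrictMono f →
        f (Fin.last m) = Fin.last p → ∀ r : Fin m, f (Fin.castSucc r) ≠ Fin.last p := by
      intro f hf hlast r
      exact ne_of_lt (hlast ▸ hf (Fin.castSucc_lt_last r))
    refine Finset.sum_bij'
      (fun f hf => fun r : Fin m => (f (Fin.castSucc r)).castPred ?_)
      (fun g _ => Fin.snoc (Fin.castSucc ∘ g) (Fin.last p)) ?_ ?_ ?_ ?_ ?_
    · simp only [Finset.mem_filter, Finset.mem_univ, true_and] at hf
      exact key f hf.1 hf.2 r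
    · intro f hf
      simp only [Finset.mem_filter, Finset.mem_univ, true_and] at hf ⊢
      exact Fin.strictMono_castPred_comp _ (hf.1.comp Fin.strictMono_castSucc)
    · intro g hg
      simp only [Finset.mem_filter, Finset.mem_univ, true_and] at hg ⊢
      exact ⟨snoc_strictMono hg, Fin.snoc_last _ _⟩
    · intro f hf
      simp only [Finset.mem_filter, Finset.mem_univ, true_and] at hf
      funext u
      induction u using Fin.lastCases with
      | last => simp [hf.2]
      | cast u' => simp [Fin.castSucc_castPred]
    · intro g hg
      funext u
      simp [Fin.snoc_castSucc, Fin.castPred_castSucc]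
    · intro f hf
      simp only [Finset.mem_filter, Finset.mem_univ, true_and] at hf
      rw [Fin.prod_univ_castSucc, mul_comm]
      have hl : x (f (Fin.last m)) -
            a (((f (Fin.last m) : ℕ) : ℤ) - ((Fin.last m : ℕ) : ℤ) + 1)
          = x (Fin.last p) - a ((p : ℤ) - (m : ℤ) + 1) := by
        rw [hf.2]; simp [Fin.val_last]
      rw [hl]
      congr 1
  have h1 : ∑ f ∈ (Finset.univ.filter
        (fun f : Fin (m + 1) → Fin (p + 1) => StrictMono f)).filter
        (fun f => ¬ f (Fin.last m) = Fin.last p),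
      ∏ r : Fin (m + 1), (x (f r) - a (((f r : ℕ) : ℤ) - ((r : ℕ) : ℤ) + 1))
      = feS p (m + 1) (x ∘ Fin.castSucc) a := by
    rw [feS]
    have key : ∀ f : Fin (m + 1) → Fin (p + 1), StrictMono f →
        ¬ f (Fin.last m) = Fin.last p → ∀ r, f r ≠ Fin.last p := by
      intro f hf hlast r
      exact ne_of_lt (lt_of_le_of_lt (hf.monotone (Fin.le_last r))
        (lt_of_le_of_ne (Fin.le_last _) hlast))
    refine Finset.sum_bij'
      (fun f hf => fun r => (f r).castPred ?_)
      (fun g _ => Fin.castSucc ∘ g) ?_ ?_ ?_ ?_ ?_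
    · simp only [Finset.mem_filter, Finset.mem_univ, true_and] at hf
      exact key f hf.1 hf.2 r
    · intro f hf
      simp only [Finset.mem_filter, Finset.mem_univ, true_and] at hf ⊢
      exact Fin.strictMono_castPred_comp _ hf.1
    · intro g hg
      simp only [Finset.mem_filter, Finset.mem_univ, true_and] at hg ⊢
      exact ⟨Fin.strictMono_castSucc.comp hg, (Fin.castSucc_lt_last _).ne⟩
    · intro f hf
      funext u
      simp [Fin.castSucc_castPred]
    · intro g hg
      funext u
      simp [Fin.castPred_castSucc]
    · intro f hf
      apply Finset.prod_congr rfl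
      intro r _
      simp [Fin.coe_castPred]
  rw [h1, h2]
  ring

lemma fh_rec (p : ℕ) (x : Fin (p + 1) → R) (b : ℤ → R) (k : ℤ) :
    fh (p + 1) x b k =
      fh p (x ∘ Fin.castSucc) b k
        + (x (Fin.last p) - b ((p : ℤ) + k)) * fh (p + 1) x b (k - 1) := by
  rcases k with n | n
  · rw [show (Int.ofNat n) = ((n : ℕ) : ℤ) from rfl]
    cases n with
    | zero =>
      rw [show ((0 : ℕ) : ℤ) - 1 = (-1 : ℤ) by norm_num,
        fh_neg _ _ _ (by norm_num : (-1 : ℤ) < 0), fh_natCast, fh_natCast,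
        fhS_zero, fhS_zero]
      ring
    | succ m =>
      rw [show ((m + 1 : ℕ) : ℤ) - 1 = ((m : ℕ) : ℤ) by push_cast; ring,
        fh_natCast, fh_natCast, fh_natCast, fhS_succ,
        show ((p : ℤ) + ((m + 1 : ℕ) : ℤ)) = ((p : ℤ) + (m : ℤ) + 1) by push_cast; ring]
  · have h1 : (Int.negSucc n) < 0 := Int.negSucc_lt_zero n
    rw [fh_neg _ _ _ h1, fh_neg _ _ _ h1, fh_neg _ _ _ (by omega : Int.negSucc n - 1 < 0)]
    ring

lemma fe_rec (p : ℕ) (x : Fin (p + 1) → R) (a : ℤ → R) (k : ℤ) :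
    fe (p + 1) x a k =
      fe p (x ∘ Fin.castSucc) a k
        + (x (Fin.last p) - a ((p : ℤ) + 2 - k)) * fe p (x ∘ Fin.castSucc) a (k - 1) := by
  rcases k with n | n
  · rw [show (Int.ofNat n) = ((n : ℕ) : ℤ) from rfl]
    cases n with
    | zero =>
      rw [show ((0 : ℕ) : ℤ) - 1 = (-1 : ℤ) by norm_num,
        fe_neg _ _ _ (by norm_num : (-1 : ℤ) < 0), fe_natCast, fe_natCast,
        feS_zero, feS_zero]
      ring
    | succ m =>
      rw [show ((m + 1 : ℕ) : ℤ) - 1 = ((m : ℕ) : ℤ) by push_cast; ring,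
        fe_natCast, fe_natCast, fe_natCast, feS_succ,
        show ((p : ℤ) + 2 - ((m + 1 : ℕ) : ℤ)) = ((p : ℤ) - (m : ℤ) + 1) by push_cast; ring]
  · have h1 : (Int.negSucc n) < 0 := Int.negSucc_lt_zero n
    rw [fe_neg _ _ _ h1, fe_neg _ _ _ h1, fe_neg _ _ _ (by omega : Int.negSucc n - 1 < 0)]
    ring

lemma fe_big {p n : ℕ} (h : p < n) (x : Fin p → R) (a : ℤ → R) :
    fe p x a (n : ℤ) = 0 := by rw [fe_natCast, feS_large h]

/-- The factorial Cauchy identity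
    `Σ_{r=0}^{p} (-1)^r e_r(x|a) h_{s-r}(x|τ^{1-s}a) = 0` for every positive integer `s`. -/
theorem factorial_cauchy (p : ℕ) (x : Fin p → R) (a : ℤ → R) (s : ℕ) (hs : 1 ≤ s) :
    ∑ r ∈ Finset.range (p + 1),
      (-1 : R) ^ r * fe p x a (r : ℤ) * fh p x (shiftSeq a (1 - (s : ℤ))) ((s : ℤ) - (r : ℤ)) = 0 := by
  induction p with
  | zero =>
    obtain ⟨t, rfl⟩ : ∃ t, s = t + 1 := ⟨s - 1, by omega⟩
    rw [Finset.sum_range_one]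
    have h1 : fe 0 x a ((0 : ℕ) : ℤ) = 1 := by rw [fe_natCast, feS_zero]
    have h2 : fh 0 x (shiftSeq a (1 - ((t + 1 : ℕ) : ℤ))) (((t + 1 : ℕ) : ℤ) - ((0 : ℕ) : ℤ)) = 0 := by
      rw [show (((t + 1 : ℕ) : ℤ) - ((0 : ℕ) : ℤ)) = ((t + 1 : ℕ) : ℤ) by push_cast; ring,
        fh_natCast, fhS_nil]
    rw [h1, h2]
    ring
  | succ p ih =>
    set b := shiftSeq a (1 - (s : ℤ)) with hb
    set x' : Fin p → R := x ∘ Fin.castSucc with hx'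
    have key : ∀ r ∈ Finset.range (p + 2),
        (-1 : R) ^ r * fe (p + 1) x a (r : ℤ) * fh (p + 1) x b ((s : ℤ) - (r : ℤ))
          = (-1 : R) ^ r * fe p x' a (r : ℤ) * fh p x' b ((s : ℤ) - (r : ℤ))
            + ((-1 : R) ^ r * (x (Fin.last p) - a ((p : ℤ) + 1 - (r : ℤ))) * fe p x' a (r : ℤ)
                * fh (p + 1) x b ((s : ℤ) - (r : ℤ) - 1))
            + ((-1 : R) ^ r * (x (Fin.last p) - a ((p : ℤ) + 2 - (r : ℤ))) * fe p x' a ((r : ℤ) - 1)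
                * fh (p + 1) x b ((s : ℤ) - (r : ℤ))) := by
      intro r _
      rw [fe_rec p x a (r : ℤ), fh_rec p x b ((s : ℤ) - (r : ℤ))]
      have hb1 : b ((p : ℤ) + ((s : ℤ) - (r : ℤ))) = a ((p : ℤ) + 1 - (r : ℤ)) := by
        rw [hb]; unfold shiftSeq; congr 1; ring
      rw [hb1]
      ring
    rw [Finset.sum_congr rfl key, Finset.sum_add_distrib, Finset.sum_add_distrib]
    have hmain : ∑ r ∈ Finset.range (p + 2),
        (-1 : R) ^ r * fe p x' a (r : ℤ) * fh p x' b ((s : ℤ) - (r : ℤ)) = 0 := by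
      rw [Finset.sum_range_succ, fe_big (by omega : p < p + 1), ih x']
      ring
    have hW : ∑ r ∈ Finset.range (p + 2),
        (-1 : R) ^ r * (x (Fin.last p) - a ((p : ℤ) + 1 - (r : ℤ))) * fe p x' a (r : ℤ)
          * fh (p + 1) x b ((s : ℤ) - (r : ℤ) - 1)
        = ∑ r ∈ Finset.range (p + 1),
        (-1 : R) ^ r * (x (Fin.last p) - a ((p : ℤ) + 1 - (r : ℤ))) * fe p x' a (r : ℤ)
          * fh (p + 1) x b ((s : ℤ) - (r : ℤ) - 1) := by
      rw [Finset.sum_range_succ, fe_big (by omega : p < p + 1)]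
      ring
    have hU : ∑ r ∈ Finset.range (p + 2),
        (-1 : R) ^ r * (x (Fin.last p) - a ((p : ℤ) + 2 - (r : ℤ))) * fe p x' a ((r : ℤ) - 1)
          * fh (p + 1) x b ((s : ℤ) - (r : ℤ))
        = - ∑ r ∈ Finset.range (p + 1),
        (-1 : R) ^ r * (x (Fin.last p) - a ((p : ℤ) + 1 - (r : ℤ))) * fe p x' a (r : ℤ)
          * fh (p + 1) x b ((s : ℤ) - (r : ℤ) - 1) := by
      rw [Finset.sum_range_succ']
      have h0 : (-1 : R) ^ 0 * (x (Fin.last p) - a ((p : ℤ) + 2 - ((0 : ℕ) : ℤ)))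
          * fe p x' a (((0 : ℕ) : ℤ) - 1) * fh (p + 1) x b ((s : ℤ) - ((0 : ℕ) : ℤ)) = 0 := by
        rw [show (((0 : ℕ) : ℤ) - 1) = (-1 : ℤ) by norm_num, fe_neg _ _ _ (by norm_num)]
        ring
      rw [h0, add_zero, ← Finset.sum_neg_distrib]
      apply Finset.sum_congr rfl
      intro r _
      rw [show ((p : ℤ) + 2 - ((r + 1 : ℕ) : ℤ)) = ((p : ℤ) + 1 - (r : ℤ)) by push_cast; ring,
        show (((r + 1 : ℕ) : ℤ) - 1) = ((r : ℕ) : ℤ) by push_cast; ring,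
        show ((s : ℤ) - ((r + 1 : ℕ) : ℤ)) = ((s : ℤ) - (r : ℤ) - 1) by push_cast; ring,
        pow_succ]
      ring
    rw [hmain, hW, hU]
    ring
end
end

section
/- (Vanishing theorem for factorial Schur functions) Let λ and ρ be partitions with at most p parts and set a_ρ = (a_{ρ_1+p}, a_{ρ_2+p−1}, ..., a_{ρ_p+1}). Then s_λ(a_ρ | a) = 0 whenever λ is not contained in ρ, and s_λ(a_λ | a) = ∏_{(i,j)∈λ} (a_{λ_i+p−i+1} − a_{p−λ'_j+j}), where λ' is the conjugate partition. -/
open Finset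
open scoped Classical

noncomputable section

variable {R : Type*} [CommRing R]

section Aux

omit [CommRing R] in
lemma shiftSeq_shiftSeq (a : ℤ → R) (s t : ℤ) :
    shiftSeq (shiftSeq a s) t = shiftSeq a (t + s) := by
  funext n; simp [shiftSeq, add_assoc]

lemma fh_of_neg {p : ℕ} {x : Fin p → R} {a : ℤ → R} {k : ℤ} (h : k < 0) :
    fh p x a k = 0 := if_neg (by omega)

lemma fh_zero (p : ℕ) (x : Fin p → R) (a : ℤ → R) : fh p x a 0 = 1 := by
  rw [fh, if_pos le_rfl]
  simp only [Int.toNat_zero]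
  rw [Finset.filter_true_of_mem (fun f _ => Subsingleton.monotone f)]
  simp

lemma fh_one (x : Fin 1 → R) (a : ℤ → R) (m : ℕ) :
    fh 1 x a (m : ℤ) = ∏ i ∈ Finset.range m, (x 0 - a ((i : ℤ) + 1)) := by
  rw [fh, if_pos (by positivity)]
  simp only [Int.toNat_natCast]
  rw [Finset.filter_true_of_mem
    (fun f _ => show Monotone f from fun u v _ => le_of_eq (Subsingleton.elim _ _))]
  rw [Finset.sum_eq_single (fun _ => (0 : Fin 1))]
  · simp only [Fin.val_zero, Nat.cast_zero, zero_add]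
    exact Fin.prod_univ_eq_prod_range (fun r => x 0 - a ((r : ℤ) + 1)) m
  · intro b _ hb
    exact absurd (funext (fun r => Subsingleton.elim _ _)) hb
  · intro h
    exact absurd (Finset.mem_univ _) h


lemma fh_cast (p : ℕ) (x : Fin p → R) (a : ℤ → R) (n : ℕ) :
    fh p x a (n : ℤ)
      = ∑ f ∈ Finset.univ.filter (fun f : Fin n → Fin p => Monotone f),
          ∏ r : Fin n, (x (f r) - a (((f r : ℕ) : ℤ) + ((r : ℕ) : ℤ) + 1)) := by
  rw [fh, if_pos (Int.natCast_nonneg n)]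
  simp only [Int.toNat_natCast]

lemma fh_cons (p : ℕ) (y : R) (x : Fin p → R) (a : ℤ → R) (k : ℤ) :
    fh (p+1) (Fin.cons y x) a k
      = fh p x (shiftSeq a 1) k
        + (y - a 1) * fh (p+1) (Fin.cons y x) (shiftSeq a 1) (k-1) := by
  rcases lt_trichotomy k 0 with hk | rfl | hk
  · rw [fh_of_neg hk, fh_of_neg hk, fh_of_neg (by omega), mul_zero, add_zero]
  · rw [fh_zero, fh_zero, fh_of_neg (by omega), mul_zero, add_zero]
  · obtain ⟨n, rfl⟩ : ∃ n : ℕ, k = ((n + 1 : ℕ) : ℤ) := ⟨(k-1).toNat, by omega⟩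
    have hsub : ((n + 1 : ℕ) : ℤ) - 1 = ((n : ℕ) : ℤ) := by push_cast; ring
    rw [hsub, fh_cast, fh_cast, fh_cast]
    set F := Finset.univ.filter (fun f : Fin (n+1) → Fin (p+1) => Monotone f) with hF
    rw [← Finset.sum_filter_add_sum_filter_not F (fun f => f 0 = 0)]
    have hB : ∑ f ∈ F.filter (fun f => ¬ f 0 = 0),
          ∏ r : Fin (n+1), ((Fin.cons y x : Fin (p+1) → R) (f r) - a (((f r : ℕ) : ℤ) + ((r : ℕ) : ℤ) + 1))
        = ∑ g ∈ Finset.univ.filter (fun g : Fin (n+1) → Fin p => Monotone g),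
          ∏ r : Fin (n+1),
            (x (g r) - shiftSeq a 1 (((g r : ℕ) : ℤ) + ((r : ℕ) : ℤ) + 1)) := by
      symm
      apply Finset.sum_bij (fun g _ => Fin.succ ∘ g)
      · intro g hg
        simp only [hF, Finset.mem_filter, Finset.mem_univ, true_and] at hg ⊢
        refine ⟨Fin.strictMono_succ.monotone.comp hg, ?_⟩
        simpa using Fin.succ_ne_zero (g 0)
      · intro g1 h1 g2 h2 h
        funext r
        exact Fin.succ_injective _ (congrFun h r)
      · intro f hf
        simp only [hF, Finset.mem_filter, Finset.mem_univ, true_and] at hf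
        have hne : ∀ r, f r ≠ 0 := by
          intro r h0
          exact hf.2 (Fin.le_zero_iff.mp (h0 ▸ hf.1 (Fin.zero_le r)))
        refine ⟨fun r => (f r).pred (hne r), ?_, ?_⟩
        · simp only [Finset.mem_filter, Finset.mem_univ, true_and]
          intro u v huv
          exact Fin.pred_le_pred_iff.mpr (hf.1 huv)
        · funext r
          simp [Fin.succ_pred]
      · intro g hg
        apply Finset.prod_congr rfl
        intro r _
        simp only [Function.comp_apply, Fin.cons_succ, shiftSeq, Fin.val_succ]
        congr 2
        push_cast
        ring
    have hA : ∑ f ∈ F.filter (fun f => f 0 = 0),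
          ∏ r : Fin (n+1), ((Fin.cons y x : Fin (p+1) → R) (f r) - a (((f r : ℕ) : ℤ) + ((r : ℕ) : ℤ) + 1))
        = (y - a 1) * ∑ g ∈ Finset.univ.filter (fun g : Fin n → Fin (p+1) => Monotone g),
          ∏ r : Fin n,
            ((Fin.cons y x : Fin (p+1) → R) (g r) - shiftSeq a 1 (((g r : ℕ) : ℤ) + ((r : ℕ) : ℤ) + 1)) := by
      rw [Finset.mul_sum]
      symm
      apply Finset.sum_bij
        (i := fun (g : Fin n → Fin (p+1)) (_ : g ∈ Finset.univ.filter
            (fun g : Fin n → Fin (p+1) => Monotone g)) =>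
          (Fin.cons 0 g : Fin (n+1) → Fin (p+1)))
      · intro g hg
        simp only [hF, Finset.mem_filter, Finset.mem_univ, true_and] at hg ⊢
        constructor
        · intro u v huv
          induction u using Fin.cases with
          | zero => simp [Fin.cons_zero, Fin.zero_le]
          | succ u =>
            induction v using Fin.cases with
            | zero =>
              exact absurd (Fin.le_zero_iff.mp huv) (Fin.succ_ne_zero u)
            | succ v =>
              simp only [Fin.cons_succ]
              exact hg (by simpa [Fin.succ_le_succ_iff] using huv)
        · simp
      · intro g1 h1 g2 h2 h
        funext r
        have := congrFun h r.succ
        simpa [Fin.cons_succ] using this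
      · intro f hf
        simp only [hF, Finset.mem_filter, Finset.mem_univ, true_and] at hf
        refine ⟨f ∘ Fin.succ, ?_, ?_⟩
        · simp only [Finset.mem_filter, Finset.mem_univ, true_and]
          exact hf.1.comp Fin.strictMono_succ.monotone
        · funext r
          induction r using Fin.cases with
          | zero => simp [Fin.cons_zero, hf.2]
          | succ r => simp [Fin.cons_succ]
      · intro g hg
        rw [Fin.prod_univ_succ]
        congr 1
    rw [hA, hB, add_comm]


lemma int_rec_aux (P : ℤ → Prop) (h0 : ∀ m : ℤ, m ≤ 0 → P m)
    (hs : ∀ m : ℤ, 1 ≤ m → P (m - 1) → P m) : ∀ m, P m := by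
  have hnat : ∀ n : ℕ, P n := by
    intro n
    induction n with
    | zero => exact h0 0 le_rfl
    | succ n ih =>
      have h1 : ((n + 1 : ℕ) : ℤ) - 1 = (n : ℤ) := by push_cast; ring
      exact hs _ (by omega) (h1 ▸ ih)
  intro m
  rcases le_or_gt m 0 with h | h
  · exact h0 m h
  · have := hnat m.toNat
    rwa [Int.toNat_of_nonneg (by omega)] at this

lemma fh_diff (p : ℕ) : ∀ (m : ℤ) (b : ℤ → R) (y z : R) (w : Fin p → R),
    fh (p+1) (Fin.cons z w) b m - fh (p+1) (Fin.cons y w) b m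
      = (z - y) * fh (p+2) (Fin.cons y (Fin.cons z w)) b (m - 1) := by
  refine int_rec_aux _ ?_ ?_
  · intro m hm b y z w
    rcases eq_or_lt_of_le hm with rfl | hm'
    · rw [fh_zero, fh_zero, fh_of_neg (by omega), mul_zero, sub_self]
    · rw [fh_of_neg hm', fh_of_neg hm', fh_of_neg (by omega), mul_zero, sub_self]
  · intro m hm ih b y z w
    rw [fh_cons p z w b m, fh_cons p y w b m,
        fh_cons (p+1) y (Fin.cons z w) b (m-1)]
    have ih' := ih (shiftSeq b 1) y z w
    linear_combination (y - b 1) * ih'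

lemma fh_swap01 (p : ℕ) : ∀ (n : ℕ) (m : ℤ), m ≤ n → ∀ (b : ℤ → R) (y z : R) (w : Fin p → R),
    fh (p+2) (Fin.cons y (Fin.cons z w)) b m = fh (p+2) (Fin.cons z (Fin.cons y w)) b m := by
  intro n
  induction n with
  | zero =>
    intro m hm b y z w
    rcases eq_or_lt_of_le hm with h | hm'
    · norm_num at h
      subst h
      rw [fh_zero, fh_zero]
    · rw [fh_of_neg (by exact_mod_cast hm'), fh_of_neg (by exact_mod_cast hm')]
  | succ n ih =>
    intro m hm b y z w
    rcases le_or_gt m n with h | h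
    · exact ih m h b y z w
    · have hm1 : (1:ℤ) ≤ m := by omega
      rw [fh_cons (p+1) y (Fin.cons z w) b m,
          fh_cons (p+1) z (Fin.cons y w) b m,
          fh_cons p z w (shiftSeq b 1) m,
          fh_cons p y w (shiftSeq b 1) m,
          fh_cons (p+1) y (Fin.cons z w) (shiftSeq b 1) (m-1),
          fh_cons (p+1) z (Fin.cons y w) (shiftSeq b 1) (m-1)]
      have hdiff := fh_diff p (m-1) (shiftSeq (shiftSeq b 1) 1) y z w
      have hC := ih (m-1-1) (by omega) (shiftSeq (shiftSeq b 1) 1) y z w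
      set b1 := b 1
      set b2 := shiftSeq b 1 1
      linear_combination (y + z - b1 - b2) * hdiff + (z - b1) * (z - b2) * hC

lemma fh_swap01' (p : ℕ) (m : ℤ) (b : ℤ → R) (y z : R) (w : Fin p → R) :
    fh (p+2) (Fin.cons y (Fin.cons z w)) b m = fh (p+2) (Fin.cons z (Fin.cons y w)) b m := by
  rcases le_or_gt m 0 with h | h
  · exact fh_swap01 p 0 m (by exact_mod_cast h) b y z w
  · exact fh_swap01 p m.toNat m (by omega) b y z w


/-- coefficients for the interpolation identity -/
def Evec : (q : ℕ) → (Fin q → R) → (ℤ → R) → ℕ → R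
  | 0, _, _, j => if j = 1 then 1 else 0
  | (q+1), z, a, j =>
      Evec q (fun r => z r.succ) a (j - 1)
        - (z 0 - a (1 - (j : ℤ))) * Evec q (fun r => z r.succ) a j

lemma Evec_zero : ∀ (q : ℕ) (z : Fin q → R) (a : ℤ → R), Evec q z a 0 = 0
  | 0, z, a => by simp [Evec]
  | (q+1), z, a => by simp [Evec, Evec_zero q]

lemma Evec_high : ∀ (q : ℕ) (z : Fin q → R) (a : ℤ → R) (j : ℕ), q + 1 < j → Evec q z a j = 0
  | 0, z, a, j, h => by
      have : j ≠ 1 := by omega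
      simp [Evec, this]
  | (q+1), z, a, j, h => by
      rw [Evec, Evec_high q _ _ _ (by omega), Evec_high q _ _ _ (by omega),
        mul_zero, sub_zero]

lemma master (q : ℕ) : ∀ (x : Fin (q+1) → R) (k : Fin (q+1)) (a : ℤ → R) (m : ℕ),
    gfp (x k) a m
      = ∑ j ∈ Finset.range (q+1),
          Evec q (x ∘ k.succAbove) a (j+1)
            * fh (q+1) x (shiftSeq a (-(j : ℤ))) ((m : ℤ) - (q : ℤ) + (j : ℤ)) := by
  induction q with
  | zero =>
    intro x k a m
    rw [Finset.sum_range_one]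
    have hk : k = 0 := Fin.fin_one_eq_zero k
    subst hk
    have h1 : Evec 0 (x ∘ Fin.succAbove 0) a (0+1) = 1 := by simp [Evec]
    rw [h1, one_mul]
    have h2 : shiftSeq a (-((0:ℕ) : ℤ)) = a := by funext n; simp [shiftSeq]
    rw [h2]
    have h3 : (m : ℤ) - ((0:ℕ) : ℤ) + ((0:ℕ) : ℤ) = (m : ℤ) := by push_cast; ring
    rw [h3, fh_one]
    rfl
  | succ q IH =>
    have key : ∀ (x : Fin (q+2) → R) (j : Fin (q+1)) (a : ℤ → R) (m : ℕ),
        gfp (x j.succ) a m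
          = ∑ t ∈ Finset.range (q+2),
              Evec (q+1) (x ∘ (j.succ).succAbove) a (t+1)
                * fh (q+2) x (shiftSeq a (-(t : ℤ))) ((m : ℤ) - ((q+1 : ℕ) : ℤ) + (t : ℤ)) := by
      intro x j a m
      set x' : Fin (q+1) → R := fun r => x r.succ with hx'
      have hcons : Fin.cons (x 0) x' = x := Fin.cons_self_tail x
      have expand : ∀ (t : ℕ) (d : ℤ),
          fh (q+1) x' (shiftSeq a (-(t : ℤ))) d
            = fh (q+2) x (shiftSeq a (-((t+1 : ℕ) : ℤ))) d
              - (x 0 - a (-(t : ℤ))) * fh (q+2) x (shiftSeq a (-(t : ℤ))) (d - 1) := by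
        intro t d
        have h1 := fh_cons (q+1) (x 0) x' (shiftSeq a (-((t+1 : ℕ) : ℤ))) d
        rw [hcons, shiftSeq_shiftSeq] at h1
        have e1 : (1 : ℤ) + -((t+1 : ℕ) : ℤ) = -(t : ℤ) := by push_cast; ring
        rw [e1] at h1
        have e2 : shiftSeq a (-((t+1 : ℕ) : ℤ)) 1 = a (-(t : ℤ)) := by
          simp only [shiftSeq]; congr 1 <;> push_cast <;> ring
        rw [e2] at h1
        linear_combination -h1
      have hEvec : ∀ t : ℕ,
          Evec (q+1) (x ∘ (j.succ).succAbove) a (t+1)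
            = Evec q (x' ∘ j.succAbove) a t
              - (x 0 - a (-(t:ℤ))) * Evec q (x' ∘ j.succAbove) a (t+1) := by
        intro t
        rw [Evec]
        have htail : (fun r : Fin q => (x ∘ (j.succ).succAbove) r.succ)
            = x' ∘ j.succAbove := by
          funext r
          simp only [Function.comp_apply, hx', Fin.succ_succAbove_succ]
        have hz0 : (x ∘ (j.succ).succAbove) 0 = x 0 := by
          simp only [Function.comp_apply, Fin.succ_succAbove_zero]
        have hidx : (1 : ℤ) - ((t+1 : ℕ) : ℤ) = -(t : ℤ) := by push_cast; ring
        rw [htail, hz0, hidx]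
        norm_num
      have lhs_eq := IH x' j a m
      have e3 : ∀ t : ℕ, (m : ℤ) - ((q+1 : ℕ) : ℤ) + ((t+1 : ℕ) : ℤ)
          = (m : ℤ) - (q : ℤ) + (t : ℤ) := by intro t; push_cast; ring
      have e4 : ∀ t : ℕ, (m : ℤ) - ((q+1 : ℕ) : ℤ) + (t : ℤ)
          = (m : ℤ) - (q : ℤ) + (t : ℤ) - 1 := by intro t; push_cast; ring
      calc gfp (x j.succ) a m
          = ∑ t ∈ Finset.range (q+1),
              Evec q (x' ∘ j.succAbove) a (t+1)
                * fh (q+1) x' (shiftSeq a (-(t : ℤ))) ((m : ℤ) - (q : ℤ) + (t : ℤ)) := lhs_eq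
        _ = ∑ t ∈ Finset.range (q+1),
              (Evec q (x' ∘ j.succAbove) a (t+1)
                  * fh (q+2) x (shiftSeq a (-((t+1 : ℕ) : ℤ))) ((m : ℤ) - (q : ℤ) + (t : ℤ))
                - (x 0 - a (-(t:ℤ))) * Evec q (x' ∘ j.succAbove) a (t+1)
                  * fh (q+2) x (shiftSeq a (-(t : ℤ))) ((m : ℤ) - (q : ℤ) + (t : ℤ) - 1)) := by
            apply Finset.sum_congr rfl
            intro t _
            rw [expand t]
            ring
        _ = ∑ t ∈ Finset.range (q+2),
              Evec (q+1) (x ∘ (j.succ).succAbove) a (t+1)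
                * fh (q+2) x (shiftSeq a (-(t : ℤ))) ((m : ℤ) - ((q+1:ℕ) : ℤ) + (t : ℤ)) := by
            symm
            calc ∑ t ∈ Finset.range (q+2),
                  Evec (q+1) (x ∘ (j.succ).succAbove) a (t+1)
                    * fh (q+2) x (shiftSeq a (-(t : ℤ))) ((m : ℤ) - ((q+1:ℕ) : ℤ) + (t : ℤ))
                = ∑ t ∈ Finset.range (q+2),
                  (Evec q (x' ∘ j.succAbove) a t
                      * fh (q+2) x (shiftSeq a (-(t : ℤ))) ((m : ℤ) - ((q+1:ℕ) : ℤ) + (t : ℤ))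
                    - (x 0 - a (-(t:ℤ))) * Evec q (x' ∘ j.succAbove) a (t+1)
                      * fh (q+2) x (shiftSeq a (-(t : ℤ))) ((m : ℤ) - ((q+1:ℕ) : ℤ) + (t : ℤ))) :=
                Finset.sum_congr rfl (fun t _ => by rw [hEvec t]; ring)
              _ = (∑ t ∈ Finset.range (q+2),
                    Evec q (x' ∘ j.succAbove) a t
                      * fh (q+2) x (shiftSeq a (-(t : ℤ))) ((m : ℤ) - ((q+1:ℕ) : ℤ) + (t : ℤ)))
                  - ∑ t ∈ Finset.range (q+2),
                    (x 0 - a (-(t:ℤ))) * Evec q (x' ∘ j.succAbove) a (t+1)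
                      * fh (q+2) x (shiftSeq a (-(t : ℤ))) ((m : ℤ) - ((q+1:ℕ) : ℤ) + (t : ℤ)) :=
                Finset.sum_sub_distrib _ _
              _ = (∑ t ∈ Finset.range (q+1),
                    Evec q (x' ∘ j.succAbove) a (t+1)
                      * fh (q+2) x (shiftSeq a (-((t+1:ℕ) : ℤ))) ((m : ℤ) - ((q+1:ℕ) : ℤ) + ((t+1:ℕ) : ℤ)))
                  - ∑ t ∈ Finset.range (q+1),
                    (x 0 - a (-(t:ℤ))) * Evec q (x' ∘ j.succAbove) a (t+1)
                      * fh (q+2) x (shiftSeq a (-(t : ℤ))) ((m : ℤ) - ((q+1:ℕ) : ℤ) + (t : ℤ)) := by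
                rw [Finset.sum_range_succ'
                  (fun t => Evec q (x' ∘ j.succAbove) a t
                    * fh (q+2) x (shiftSeq a (-(t : ℤ))) ((m : ℤ) - ((q+1:ℕ) : ℤ) + (t : ℤ))) (q+1)]
                rw [Finset.sum_range_succ
                  (fun t => (x 0 - a (-(t:ℤ))) * Evec q (x' ∘ j.succAbove) a (t+1)
                    * fh (q+2) x (shiftSeq a (-(t : ℤ))) ((m : ℤ) - ((q+1:ℕ) : ℤ) + (t : ℤ)))]
                rw [Evec_zero, Evec_high q _ _ (q+1+1) (by omega)]
                ring
              _ = ∑ t ∈ Finset.range (q+1),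
                  (Evec q (x' ∘ j.succAbove) a (t+1)
                      * fh (q+2) x (shiftSeq a (-((t+1 : ℕ) : ℤ))) ((m : ℤ) - (q : ℤ) + (t : ℤ))
                    - (x 0 - a (-(t:ℤ))) * Evec q (x' ∘ j.succAbove) a (t+1)
                      * fh (q+2) x (shiftSeq a (-(t : ℤ))) ((m : ℤ) - (q : ℤ) + (t : ℤ) - 1)) := by
                rw [← Finset.sum_sub_distrib]
                exact Finset.sum_congr rfl (fun t _ => by rw [e3 t, e4 t])
    intro x k a m
    rcases Fin.eq_zero_or_eq_succ k with rfl | ⟨j, rfl⟩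
    · -- k = 0 : use the swap of the first two variables
      set T : Fin q → R := fun r => x r.succ.succ with hT
      have hx : x = Fin.cons (x 0) (Fin.cons (x 1) T) := by
        funext r
        induction r using Fin.cases with
        | zero => simp
        | succ r =>
          induction r using Fin.cases with
          | zero => simp [Fin.cons_succ]
          | succ r => simp [Fin.cons_succ, hT]
      set xt : Fin (q+2) → R := Fin.cons (x 1) (Fin.cons (x 0) T) with hxt
      have hswap : ∀ (b : ℤ → R) (d : ℤ), fh (q+2) x b d = fh (q+2) xt b d := by
        intro b d
        rw [hx]
        exact fh_swap01' q d b (x 0) (x 1) T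
      have hcomp : xt ∘ (Fin.succ (0 : Fin (q+1))).succAbove
          = x ∘ (0 : Fin (q+2)).succAbove := by
        funext r
        induction r using Fin.cases with
        | zero =>
          simp [hxt, Fin.succ_succAbove_zero, Fin.succAbove_zero, Fin.succ_zero_eq_one]
        | succ r =>
          simp [hxt, hT, Fin.succ_succAbove_succ, Fin.succAbove_zero, Fin.cons_succ]
      have hval : xt ((0 : Fin (q+1)).succ) = x 0 := by
        rw [hxt]; simp [Fin.cons_succ]
      have hk := key xt 0 a m
      rw [hval, hcomp] at hk
      rw [hk]
      apply Finset.sum_congr rfl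
      intro t _
      rw [hswap]
    · exact key x j a m


section Maps
variable {S : Type*} [CommRing S] (φ : R →+* S)

lemma map_gfp (y : R) (a : ℤ → R) (m : ℕ) : φ (gfp y a m) = gfp (φ y) (φ ∘ a) m := by
  simp [gfp]

lemma map_fh (p : ℕ) (x : Fin p → R) (a : ℤ → R) (k : ℤ) :
    φ (fh p x a k) = fh p (φ ∘ x) (φ ∘ a) k := by
  rw [fh, fh]
  split
  · rw [map_sum]
    refine Finset.sum_congr rfl (fun f _ => ?_)
    rw [map_prod]
    exact Finset.prod_congr rfl (fun r _ => by simp)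
  · simp

lemma map_fschur (p : ℕ) (lam : Fin p → ℕ) (x : Fin p → R) (a : ℤ → R) :
    φ (fschur p lam x a) = fschur p lam (φ ∘ x) (φ ∘ a) := by
  rw [fschur, fschur, RingHom.map_det]
  congr 1
  ext i j
  simp only [RingHom.mapMatrix_apply, Matrix.map_apply, Matrix.of_apply]
  exact map_fh φ _ _ _ _

end Maps

lemma gfp_eval_poly (y : R) (a : ℤ → R) (m : ℕ) :
    gfp y a m
      = (∏ t ∈ Finset.range m, (Polynomial.X - Polynomial.C (a ((t:ℤ)+1)))).eval y := by
  rw [Polynomial.eval_prod]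
  exact Finset.prod_congr rfl (fun t _ => by simp)

lemma det_G0 [Nontrivial R] (q : ℕ) (x : Fin (q+1) → R) (a : ℤ → R) :
    Matrix.det (Matrix.of fun i k : Fin (q+1) => gfp (x k) a (q - (i:ℕ)))
      = ∏ i : Fin (q+1), ∏ k ∈ Finset.Ioi i, (x i - x k) := by
  set P : ℕ → Polynomial R :=
    fun d => ∏ t ∈ Finset.range d, (Polynomial.X - Polynomial.C (a ((t:ℤ)+1))) with hP
  have hmonic : ∀ d, (P d).Monic :=
    fun d => Polynomial.monic_prod_of_monic _ _ (fun t _ => Polynomial.monic_X_sub_C _)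
  have hdeg : ∀ d, (P d).natDegree = d := by
    intro d
    rw [hP]
    rw [Polynomial.natDegree_prod_of_monic _ _ (fun t _ => Polynomial.monic_X_sub_C _)]
    simp [Polynomial.natDegree_X_sub_C]
  have hfact : (Matrix.of fun i k : Fin (q+1) => gfp (x k) a (q - (i:ℕ)))
      = (Matrix.of fun i i' : Fin (q+1) => (P (q - (i:ℕ))).coeff (q - (i':ℕ)))
        * (Matrix.of fun i' k : Fin (q+1) => x k ^ (q - (i':ℕ))) := by
    ext i k
    rw [Matrix.mul_apply]
    simp only [Matrix.of_apply]
    rw [gfp_eval_poly, Polynomial.eval_eq_sum_range' (n := q+1) (by rw [hdeg]; omega)]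
    rw [← Finset.sum_range_reflect]
    rw [Finset.sum_range
      (fun e => (P (q - (i:ℕ))).coeff (q + 1 - 1 - e) * x k ^ (q + 1 - 1 - e))]
    exact Finset.sum_congr rfl (fun i' _ => by norm_num)
  rw [hfact, Matrix.det_mul]
  have hdetC : (Matrix.of fun i i' : Fin (q+1) =>
      (P (q - (i:ℕ))).coeff (q - (i':ℕ))).det = 1 := by
    rw [Matrix.det_of_upperTriangular]
    · apply Finset.prod_eq_one
      intro i _
      simp only [Matrix.of_apply]
      have h := (hmonic (q - (i:ℕ))).coeff_natDegree
      rwa [hdeg] at h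
    · intro i i' hlt
      simp only [Matrix.of_apply]
      apply Polynomial.coeff_eq_zero_of_natDegree_lt
      rw [hdeg]
      have h1 : (i':ℕ) < (i:ℕ) := hlt
      have h2 : (i:ℕ) < q + 1 := i.isLt
      omega
  rw [hdetC, one_mul]
  rw [← Matrix.det_submatrix_equiv_self Fin.revPerm
    (Matrix.of fun i' k : Fin (q+1) => x k ^ (q - (i':ℕ)))]
  have hsub : (Matrix.of fun i' k : Fin (q+1) => x k ^ (q - (i':ℕ))).submatrix
        Fin.revPerm Fin.revPerm
      = (Matrix.vandermonde (fun k => x (Fin.rev k))).transpose := by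
    ext i k
    simp only [Matrix.submatrix_apply, Matrix.of_apply, Matrix.transpose_apply,
      Matrix.vandermonde, Fin.revPerm_apply]
    congr 1
    rw [Fin.val_rev]
    have h2 : (i:ℕ) < q + 1 := i.isLt
    omega
  rw [hsub, Matrix.det_transpose, Matrix.det_vandermonde]
  rw [Finset.prod_sigma', Finset.prod_sigma']
  refine Finset.prod_nbij' (fun z => ⟨Fin.rev z.2, Fin.rev z.1⟩)
    (fun z => ⟨Fin.rev z.2, Fin.rev z.1⟩) ?_ ?_ ?_ ?_ ?_
  · intro z hz
    simp only [Finset.mem_sigma, Finset.mem_univ, Finset.mem_Ioi, true_and] at hz ⊢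
    exact Fin.rev_lt_rev.mpr hz
  · intro z hz
    simp only [Finset.mem_sigma, Finset.mem_univ, Finset.mem_Ioi, true_and] at hz ⊢
    exact Fin.rev_lt_rev.mpr hz
  · intro z _
    simp [Fin.rev_rev]
  · intro z _
    simp [Fin.rev_rev]
  · intro z _
    rfl


lemma det_JT_mul (q : ℕ) (lam : Fin (q+1) → ℕ) (x : Fin (q+1) → R) (a : ℤ → R)
    (M : Fin (q+1) → ℕ) (hM : ∀ i : Fin (q+1), (M i : ℤ) = (lam i : ℤ) + (q : ℤ) - ((i:ℕ) : ℤ)) :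
    Matrix.det (Matrix.of fun i k : Fin (q+1) => gfp (x k) a (M i))
      = fschur (q+1) lam x a
        * Matrix.det (Matrix.of fun j k : Fin (q+1) =>
            Evec q (x ∘ k.succAbove) a ((j:ℕ)+1)) := by
  rw [fschur, ← Matrix.det_mul]
  congr 1
  ext i k
  rw [Matrix.mul_apply]
  simp only [Matrix.of_apply]
  rw [master q x k a (M i)]
  rw [Finset.sum_range (fun t => Evec q (x ∘ k.succAbove) a (t+1)
    * fh (q+1) x (shiftSeq a (-(t:ℤ))) ((M i : ℤ) - (q:ℤ) + (t:ℤ)))]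
  apply Finset.sum_congr rfl
  intro j _
  rw [mul_comm]
  congr 1
  rw [hM i]
  ring

lemma det_JT_zero (q : ℕ) (x : Fin (q+1) → R) (a : ℤ → R) :
    fschur (q+1) (fun _ => 0) x a = 1 := by
  rw [fschur, Matrix.det_of_upperTriangular]
  · apply Finset.prod_eq_one
    intro i _
    simp only [Matrix.of_apply]
    have h : (((0:ℕ):ℤ)) - ((i:ℕ):ℤ) + ((i:ℕ):ℤ) = 0 := by push_cast; ring
    rw [h, fh_zero]
  · intro i j hji
    simp only [Matrix.of_apply]
    apply fh_of_neg
    have h : (j:ℕ) < (i:ℕ) := hji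
    omega

lemma det_E_eq (q : ℕ) (x : Fin (q+1) → R) (a : ℤ → R) :
    Matrix.det (Matrix.of fun j k : Fin (q+1) => Evec q (x ∘ k.succAbove) a ((j:ℕ)+1))
      = Matrix.det (Matrix.of fun i k : Fin (q+1) => gfp (x k) a (q - (i:ℕ))) := by
  have h := det_JT_mul q (fun _ => 0) x a (fun i => q - (i:ℕ))
    (fun i => by
      have := i.isLt
      show ((q - (i:ℕ) : ℕ) : ℤ) = ((0:ℕ):ℤ) + (q:ℤ) - ((i:ℕ):ℤ)
      omega)
  rw [det_JT_zero, one_mul] at h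
  exact h.symm

lemma det_zero_block {n : ℕ} (M : Matrix (Fin n) (Fin n) R) (i0 : Fin n)
    (h : ∀ i k : Fin n, i ≤ i0 → i0 ≤ k → M i k = 0) : M.det = 0 := by
  rw [Matrix.det_apply]
  apply Finset.sum_eq_zero
  intro σ _
  have hex : ∃ k : Fin n, i0 ≤ k ∧ σ k ≤ i0 := by
    by_contra hc
    push_neg at hc
    have hmaps : ∀ k ∈ Finset.Ici i0, σ k ∈ Finset.Ioi i0 := by
      intro k hk
      simp only [Finset.mem_Ici] at hk
      simp only [Finset.mem_Ioi]
      exact hc k hk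
    have hinj : Set.InjOn σ (Finset.Ici i0) := fun u _ v _ huv => σ.injective huv
    have hcard := Finset.card_le_card_of_injOn σ hmaps hinj
    rw [Fin.card_Ici, Fin.card_Ioi] at hcard
    have := i0.isLt
    omega
  obtain ⟨k, hk1, hk2⟩ := hex
  have hz : ∏ i : Fin n, M (σ i) i = 0 :=
    Finset.prod_eq_zero (f := fun i => M (σ i) i) (Finset.mem_univ k) (h (σ k) k hk2 hk1)
  rw [hz, smul_zero]

lemma gfp_eq_zero (a : ℤ → R) (r : ℤ) (M : ℕ) (h1 : 1 ≤ r) (h2 : r ≤ (M:ℤ)) :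
    gfp (a r) a M = 0 := by
  rw [gfp]
  apply Finset.prod_eq_zero (i := (r - 1).toNat)
  · simp only [Finset.mem_range]
    omega
  · have h3 : (((r-1).toNat : ℕ) : ℤ) + 1 = r := by omega
    rw [h3, sub_self]


lemma interval_split (p : ℕ) (lam : Fin p → ℕ) (hlam : Antitone lam) (i : Fin p) :
    Finset.Icc 1 (lam i + (p - 1 - (i:ℕ)))
      = ((Finset.Ioi i).image (fun k => lam k + (p - (k:ℕ))))
        ∪ ((Finset.range (lam i)).image
            (fun j => p - (Finset.univ.filter (fun r : Fin p => j + 1 ≤ lam r)).card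
              + (j+1))) := by
  set L : ℕ → ℕ := fun j => (Finset.univ.filter (fun r : Fin p => j + 1 ≤ lam r)).card
    with hL
  have hLle : ∀ j, L j ≤ p := by
    intro j
    calc L j ≤ (Finset.univ : Finset (Fin p)).card := Finset.card_filter_le _ _
      _ = p := by simp
  have hLge : ∀ (j : ℕ) (r : Fin p), j + 1 ≤ lam r → (r:ℕ) + 1 ≤ L j := by
    intro j r hr
    have hsub : Finset.Iic r ⊆ Finset.univ.filter (fun s : Fin p => j + 1 ≤ lam s) := by
      intro s hs
      simp only [Finset.mem_Iic] at hs
      simp only [Finset.mem_filter, Finset.mem_univ, true_and]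
      exact le_trans hr (hlam hs)
    have := Finset.card_le_card hsub
    rwa [Fin.card_Iic] at this
  have hLlt : ∀ (j : ℕ) (r : Fin p), lam r < j + 1 → L j ≤ (r:ℕ) := by
    intro j r hr
    have hsub : Finset.univ.filter (fun s : Fin p => j + 1 ≤ lam s) ⊆ Finset.Iio r := by
      intro s hs
      simp only [Finset.mem_filter, Finset.mem_univ, true_and] at hs
      simp only [Finset.mem_Iio]
      by_contra hc
      push_neg at hc
      exact absurd (le_trans hs (hlam hc)) (by omega)
    have := Finset.card_le_card hsub
    rwa [Fin.card_Iio] at this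
  have hanti : ∀ j j', j ≤ j' → L j' ≤ L j := by
    intro j j' hj
    apply Finset.card_le_card
    apply Finset.monotone_filter_right
    intro r hr
    omega
  have hstrictA : ∀ k k' : Fin p, k < k' → lam k' + (p - (k':ℕ)) < lam k + (p - (k:ℕ)) := by
    intro k k' hk
    have h1 := hlam (le_of_lt hk)
    have h2 := k'.isLt
    have h3 : (k:ℕ) < (k':ℕ) := hk
    omega
  have hsub : ((Finset.Ioi i).image (fun k => lam k + (p - (k:ℕ))))
        ∪ ((Finset.range (lam i)).image (fun j => p - L j + (j+1)))
      ⊆ Finset.Icc 1 (lam i + (p - 1 - (i:ℕ))) := by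
    intro s hs
    simp only [Finset.mem_union, Finset.mem_image, Finset.mem_Ioi, Finset.mem_range] at hs
    simp only [Finset.mem_Icc]
    rcases hs with ⟨k, hk, rfl⟩ | ⟨j, hj, rfl⟩
    · have h1 := hlam (le_of_lt hk)
      have h2 := k.isLt
      have h3 : (i:ℕ) < (k:ℕ) := hk
      omega
    · have h1 := hLge j i (by omega)
      have h2 := hLle j
      have h3 := i.isLt
      omega
  apply (Finset.eq_of_subset_of_card_le hsub ?_).symm
  have hdisj : Disjoint ((Finset.Ioi i).image (fun k => lam k + (p - (k:ℕ))))
      ((Finset.range (lam i)).image (fun j => p - L j + (j+1))) := by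
    rw [Finset.disjoint_left]
    intro s hsA hsB
    simp only [Finset.mem_image, Finset.mem_Ioi, Finset.mem_range] at hsA hsB
    obtain ⟨k, _, hk2⟩ := hsA
    obtain ⟨j, hj1, hj2⟩ := hsB
    have h2 := hLle j
    have h3 := k.isLt
    rcases le_or_gt (j+1) (lam k) with hc | hc
    · have := hLge j k hc
      omega
    · have := hLlt j k hc
      omega
  rw [Finset.card_union_of_disjoint hdisj]
  have hcardA : ((Finset.Ioi i).image (fun k => lam k + (p - (k:ℕ)))).card
      = p - 1 - (i:ℕ) := by
    rw [Finset.card_image_of_injOn, Fin.card_Ioi]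
    intro k _ k' _ hkk
    by_contra hne
    rcases lt_or_gt_of_ne (fun h : k = k' => hne h) with h | h
    · exact absurd hkk (ne_of_gt (hstrictA k k' h))
    · exact absurd hkk (ne_of_lt (hstrictA k' k h))
  have hcardB : ((Finset.range (lam i)).image (fun j => p - L j + (j+1))).card
      = lam i := by
    rw [Finset.card_image_of_injOn, Finset.card_range]
    intro j hj j' hj' hjj
    have hjj' : p - L j + (j+1) = p - L j' + (j'+1) := hjj
    by_contra hne
    rcases lt_or_gt_of_ne hne with h | h
    · have := hanti j j' (by omega)
      have := hLle j
      omega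
    · have := hanti j' j (by omega)
      have := hLle j'
      omega
  rw [hcardA, hcardB, Nat.card_Icc]
  have := i.isLt
  omega


lemma gfp_prod_Icc (y : R) (a : ℤ → R) (M : ℕ) :
    gfp y a M = ∏ s ∈ Finset.Icc 1 M, (y - a ((s:ℕ) : ℤ)) := by
  rw [gfp]
  refine Finset.prod_nbij' (fun t => t+1) (fun s => s-1) ?_ ?_ ?_ ?_ ?_
  · intro t ht
    simp only [Finset.mem_range] at ht
    simp only [Finset.mem_Icc]
    omega
  · intro s hs
    simp only [Finset.mem_Icc] at hs
    simp only [Finset.mem_range]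
    omega
  · intro t _
    show t + 1 - 1 = t
    omega
  · intro s hs
    simp only [Finset.mem_Icc] at hs
    show s - 1 + 1 = s
    omega
  · intro t _
    congr 1 <;> push_cast <;> ring

lemma generic_vanish (q : ℕ) (lam rho : Fin (q+1) → ℕ)
    (hlam : Antitone lam) (hrho : Antitone rho) (i0 : Fin (q+1)) (hbad : rho i0 < lam i0) :
    fschur (q+1) lam
      (fun k : Fin (q+1) =>
        (MvPolynomial.X ((rho k : ℤ) + ((q+1 : ℕ) : ℤ) - ((k:ℕ) : ℤ)) : MvPolynomial ℤ ℤ))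
      MvPolynomial.X = 0 := by
  set x : Fin (q+1) → MvPolynomial ℤ ℤ :=
    fun k => MvPolynomial.X ((rho k : ℤ) + ((q+1 : ℕ) : ℤ) - ((k:ℕ) : ℤ)) with hx
  have hJT := det_JT_mul q lam x MvPolynomial.X (fun i => lam i + (q - (i:ℕ)))
    (fun i => by
      have := i.isLt
      show ((lam i + (q - (i:ℕ)) : ℕ) : ℤ) = (lam i : ℤ) + (q:ℤ) - ((i:ℕ):ℤ)
      omega)
  have hdetG : Matrix.det (Matrix.of fun i k : Fin (q+1) =>
      gfp (x k) MvPolynomial.X (lam i + (q - (i:ℕ)))) = 0 := by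
    apply det_zero_block _ i0
    intro i k hi hk
    simp only [Matrix.of_apply, hx]
    apply gfp_eq_zero
    · have := k.isLt
      omega
    · have h1 := hrho hk
      have h2 := hlam hi
      have h3 := i.isLt
      have h4 := k.isLt
      omega
  rw [hdetG] at hJT
  rw [det_E_eq q x MvPolynomial.X, det_G0 q x MvPolynomial.X] at hJT
  have hΔ : (∏ i : Fin (q+1), ∏ k ∈ Finset.Ioi i, (x i - x k)) ≠ 0 := by
    rw [Finset.prod_ne_zero_iff]
    intro i _
    rw [Finset.prod_ne_zero_iff]
    intro k hk
    apply sub_ne_zero_of_ne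
    simp only [hx]
    intro hXeq
    have h := MvPolynomial.X_injective hXeq
    have hik : i < k := Finset.mem_Ioi.mp hk
    have h1 := hrho hik.le
    have h2 : (i:ℕ) < (k:ℕ) := hik
    have h3 := k.isLt
    omega
  rcases mul_eq_zero.mp hJT.symm with h | h
  · exact h
  · exact absurd h hΔ


lemma generic_prod (q : ℕ) (lam : Fin (q+1) → ℕ) (hlam : Antitone lam) :
    fschur (q+1) lam
      (fun k : Fin (q+1) =>
        (MvPolynomial.X ((lam k : ℤ) + ((q+1 : ℕ) : ℤ) - ((k:ℕ) : ℤ)) : MvPolynomial ℤ ℤ))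
      MvPolynomial.X
      = ∏ i : Fin (q+1), ∏ j ∈ Finset.range (lam i),
          (MvPolynomial.X ((lam i : ℤ) + ((q+1:ℕ) : ℤ) - ((i:ℕ):ℤ))
            - MvPolynomial.X (((q+1:ℕ):ℤ)
                - ((Finset.univ.filter (fun r : Fin (q+1) => j + 1 ≤ lam r)).card : ℤ)
                + ((j:ℤ)+1))) := by
  set x : Fin (q+1) → MvPolynomial ℤ ℤ :=
    fun k => MvPolynomial.X ((lam k : ℤ) + ((q+1 : ℕ) : ℤ) - ((k:ℕ) : ℤ)) with hx
  set L : ℕ → ℕ :=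
    fun j => (Finset.univ.filter (fun r : Fin (q+1) => j + 1 ≤ lam r)).card with hL
  have hLle : ∀ j, L j ≤ q+1 := by
    intro j
    calc L j ≤ (Finset.univ : Finset (Fin (q+1))).card := Finset.card_filter_le _ _
      _ = q+1 := by simp
  have hLge : ∀ (j : ℕ) (r : Fin (q+1)), j + 1 ≤ lam r → (r:ℕ) + 1 ≤ L j := by
    intro j r hr
    have hsub : Finset.Iic r ⊆ Finset.univ.filter (fun s : Fin (q+1) => j + 1 ≤ lam s) := by
      intro s hs
      simp only [Finset.mem_Iic] at hs
      simp only [Finset.mem_filter, Finset.mem_univ, true_and]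
      exact le_trans hr (hlam hs)
    have h := Finset.card_le_card hsub
    rwa [Fin.card_Iic] at h
  have hLlt : ∀ (j : ℕ) (r : Fin (q+1)), lam r < j + 1 → L j ≤ (r:ℕ) := by
    intro j r hr
    have hsub : Finset.univ.filter (fun s : Fin (q+1) => j + 1 ≤ lam s) ⊆ Finset.Iio r := by
      intro s hs
      simp only [Finset.mem_filter, Finset.mem_univ, true_and] at hs
      simp only [Finset.mem_Iio]
      by_contra hc
      push_neg at hc
      exact absurd (le_trans hs (hlam hc)) (by omega)
    have h := Finset.card_le_card hsub
    rwa [Fin.card_Iio] at h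
  have hanti : ∀ j j', j ≤ j' → L j' ≤ L j := by
    intro j j' hj
    apply Finset.card_le_card
    apply Finset.monotone_filter_right
    intro r hr
    omega
  have hstrictA : ∀ k k' : Fin (q+1), k < k' →
      lam k' + ((q+1) - (k':ℕ)) < lam k + ((q+1) - (k:ℕ)) := by
    intro k k' hk
    have h1 := hlam (le_of_lt hk)
    have h2 := k'.isLt
    have h3 : (k:ℕ) < (k':ℕ) := hk
    omega
  have hJT := det_JT_mul q lam x MvPolynomial.X (fun i => lam i + (q - (i:ℕ)))
    (fun i => by
      have := i.isLt
      show ((lam i + (q - (i:ℕ)) : ℕ) : ℤ) = (lam i : ℤ) + (q:ℤ) - ((i:ℕ):ℤ)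
      omega)
  have hblock : (Matrix.of fun i k : Fin (q+1) =>
      gfp (x k) MvPolynomial.X (lam i + (q - (i:ℕ)))).BlockTriangular OrderDual.toDual := by
    intro i k hik
    have h2 : i < k := hik
    simp only [Matrix.of_apply, hx]
    apply gfp_eq_zero
    · have := k.isLt
      omega
    · have h1 := hlam h2.le
      have h3 := i.isLt
      have h4 := k.isLt
      have h5 : (i:ℕ) < (k:ℕ) := h2
      omega
  have htri := Matrix.det_of_lowerTriangular _ hblock
  have hdisj : ∀ i : Fin (q+1),
      Disjoint ((Finset.Ioi i).image (fun k => lam k + ((q+1) - (k:ℕ))))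
        ((Finset.range (lam i)).image (fun j => (q+1) - L j + (j+1))) := by
    intro i
    rw [Finset.disjoint_left]
    intro s hsA hsB
    simp only [Finset.mem_image, Finset.mem_Ioi, Finset.mem_range] at hsA hsB
    obtain ⟨k, _, hk2⟩ := hsA
    obtain ⟨j, hj1, hj2⟩ := hsB
    have h2 := hLle j
    have h3 := k.isLt
    rcases le_or_gt (j+1) (lam k) with hc | hc
    · have := hLge j k hc
      omega
    · have := hLlt j k hc
      omega
  have hsplit : ∀ i : Fin (q+1),
      gfp (x i) MvPolynomial.X (lam i + (q - (i:ℕ)))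
        = (∏ j ∈ Finset.range (lam i),
            (x i - MvPolynomial.X (((q+1:ℕ):ℤ) - ((L j):ℤ) + ((j:ℤ)+1))))
          * ∏ k ∈ Finset.Ioi i, (x i - x k) := by
    intro i
    have hA : (∏ k ∈ Finset.Ioi i,
          (x i - MvPolynomial.X (((lam k + ((q+1) - (k:ℕ)) : ℕ)) : ℤ)))
        = ∏ k ∈ Finset.Ioi i, (x i - x k) := by
      apply Finset.prod_congr rfl
      intro k hk
      have h3 := k.isLt
      congr 1
      simp only [hx]
      congr 1
      omega
    have hB : (∏ j ∈ Finset.range (lam i),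
          (x i - MvPolynomial.X ((((q+1) - L j + (j+1) : ℕ)) : ℤ)))
        = ∏ j ∈ Finset.range (lam i),
          (x i - MvPolynomial.X (((q+1:ℕ):ℤ) - ((L j):ℤ) + ((j:ℤ)+1))) := by
      apply Finset.prod_congr rfl
      intro j hj
      have h := hLle j
      congr 2
      omega
    calc gfp (x i) MvPolynomial.X (lam i + (q - (i:ℕ)))
        = ∏ s ∈ Finset.Icc 1 (lam i + ((q+1) - 1 - (i:ℕ))),
            (x i - MvPolynomial.X ((s:ℕ):ℤ)) := by
          rw [gfp_prod_Icc,
            show lam i + (q - (i:ℕ)) = lam i + ((q+1) - 1 - (i:ℕ)) from by omega]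
      _ = (∏ k ∈ Finset.Ioi i,
            (x i - MvPolynomial.X (((lam k + ((q+1) - (k:ℕ)) : ℕ)) : ℤ)))
          * ∏ j ∈ Finset.range (lam i),
            (x i - MvPolynomial.X ((((q+1) - L j + (j+1) : ℕ)) : ℤ)) := by
          rw [interval_split (q+1) lam hlam i, Finset.prod_union (hdisj i),
            Finset.prod_image (fun k hk k' hk' hkk => by
              by_contra hne
              rcases lt_or_gt_of_ne (fun h : k = k' => hne h) with h | h
              · exact absurd hkk (ne_of_gt (hstrictA k k' h))
              · exact absurd hkk (ne_of_lt (hstrictA k' k h))),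
            Finset.prod_image (fun j hj j' hj' hjj => by
              have hjj' : (q+1) - L j + (j+1) = (q+1) - L j' + (j'+1) := hjj
              by_contra hne
              rcases lt_or_gt_of_ne hne with h | h
              · have := hanti j j' (by omega)
                have := hLle j
                omega
              · have := hanti j' j (by omega)
                have := hLle j'
                omega)]
      _ = (∏ j ∈ Finset.range (lam i),
            (x i - MvPolynomial.X (((q+1:ℕ):ℤ) - ((L j):ℤ) + ((j:ℤ)+1))))
          * ∏ k ∈ Finset.Ioi i, (x i - x k) := by
          rw [hA, hB, mul_comm]
  have hΔne : (∏ i : Fin (q+1), ∏ k ∈ Finset.Ioi i, (x i - x k)) ≠ 0 := by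
    rw [Finset.prod_ne_zero_iff]
    intro i _
    rw [Finset.prod_ne_zero_iff]
    intro k hk
    apply sub_ne_zero_of_ne
    simp only [hx]
    intro hXeq
    have h := MvPolynomial.X_injective hXeq
    have hik : i < k := Finset.mem_Ioi.mp hk
    have h1 := hlam hik.le
    have h2 : (i:ℕ) < (k:ℕ) := hik
    have h3 := k.isLt
    omega
  apply mul_right_cancel₀ hΔne
  calc fschur (q+1) lam x MvPolynomial.X * (∏ i : Fin (q+1), ∏ k ∈ Finset.Ioi i, (x i - x k))
      = fschur (q+1) lam x MvPolynomial.X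
        * (Matrix.of fun j k : Fin (q+1) =>
            Evec q (x ∘ k.succAbove) MvPolynomial.X ((j:ℕ)+1)).det := by
        rw [det_E_eq q x MvPolynomial.X, det_G0 q x MvPolynomial.X]
    _ = (Matrix.of fun i k : Fin (q+1) =>
          gfp (x k) MvPolynomial.X (lam i + (q - (i:ℕ)))).det := by
        rw [← hJT]
    _ = ∏ i : Fin (q+1), gfp (x i) MvPolynomial.X (lam i + (q - (i:ℕ))) := by
        rw [htri]
        exact Finset.prod_congr rfl (fun i _ => rfl)
    _ = ∏ i : Fin (q+1),
          ((∏ j ∈ Finset.range (lam i),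
            (x i - MvPolynomial.X (((q+1:ℕ):ℤ) - ((L j):ℤ) + ((j:ℤ)+1))))
          * ∏ k ∈ Finset.Ioi i, (x i - x k)) :=
        Finset.prod_congr rfl (fun i _ => hsplit i)
    _ = (∏ i : Fin (q+1), ∏ j ∈ Finset.range (lam i),
          (x i - MvPolynomial.X (((q+1:ℕ):ℤ) - ((L j):ℤ) + ((j:ℤ)+1))))
        * ∏ i : Fin (q+1), ∏ k ∈ Finset.Ioi i, (x i - x k) :=
        Finset.prod_mul_distrib

end Aux

/-- (Vanishing theorem.)  With `a_ρ = (a_{ρ_1+p},...,a_{ρ_p+1})`: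
    `s_λ(a_ρ|a) = 0` unless `λ ⊆ ρ`, and
    `s_λ(a_λ|a) = ∏_{(i,j)∈λ} (a_{λ_i+p-i+1} - a_{p-λ'_j+j})`. -/
theorem factorial_schur_vanishing (p : ℕ) (a : ℤ → R)
    (lam rho : Fin p → ℕ) (hlam : Antitone lam) (hrho : Antitone rho) :
    (¬ lam ≤ rho →
      fschur p lam (fun j : Fin p => a ((rho j : ℤ) + (p : ℤ) - (j : ℕ))) a = 0) ∧
    fschur p lam (fun j : Fin p => a ((lam j : ℤ) + (p : ℤ) - (j : ℕ))) a =
      ∏ i : Fin p, ∏ j ∈ Finset.range (lam i),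
        (a ((lam i : ℤ) + (p : ℤ) - (i : ℕ)) -
          a ((p : ℤ) - ((Finset.univ.filter (fun r : Fin p => j + 1 ≤ lam r)).card : ℤ)
            + ((j : ℤ) + 1))) := by
  rcases Nat.eq_zero_or_pos p with rfl | hp
  · constructor
    · intro hnot
      exact absurd (fun i => i.elim0) hnot
    · simp [fschur, Matrix.det_isEmpty]
  · obtain ⟨q, rfl⟩ : ∃ q, p = q + 1 := ⟨p - 1, by omega⟩
    set φ : MvPolynomial ℤ ℤ →+* R := (MvPolynomial.aeval a).toRingHom with hφ
    have hφX : ∀ n : ℤ, φ (MvPolynomial.X n) = a n := fun n => MvPolynomial.aeval_X a n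
    have hφa : φ ∘ MvPolynomial.X = a := funext fun n => hφX n
    constructor
    · intro hnot
      have hex : ∃ i0, rho i0 < lam i0 := by
        by_contra hc
        push_neg at hc
        exact hnot (fun i => hc i)
      obtain ⟨i0, hi0⟩ := hex
      have hgen := generic_vanish q lam rho hlam hrho i0 hi0
      have hmapped := congrArg φ hgen
      rw [map_zero, map_fschur] at hmapped
      have h1 : φ ∘ (fun k : Fin (q+1) =>
            (MvPolynomial.X ((rho k : ℤ) + ((q+1 : ℕ) : ℤ) - ((k:ℕ) : ℤ)) : MvPolynomial ℤ ℤ))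
          = fun j : Fin (q+1) => a ((rho j : ℤ) + ((q+1 : ℕ) : ℤ) - ((j:ℕ) : ℤ)) :=
        funext fun k => hφX _
      rw [h1, hφa] at hmapped
      exact hmapped
    · have hgen := generic_prod q lam hlam
      have hmapped := congrArg φ hgen
      rw [map_fschur] at hmapped
      have h1 : φ ∘ (fun k : Fin (q+1) =>
            (MvPolynomial.X ((lam k : ℤ) + ((q+1 : ℕ) : ℤ) - ((k:ℕ) : ℤ)) : MvPolynomial ℤ ℤ))
          = fun j : Fin (q+1) => a ((lam j : ℤ) + ((q+1 : ℕ) : ℤ) - ((j:ℕ) : ℤ)) :=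
        funext fun k => hφX _
      rw [h1, hφa] at hmapped
      rw [map_prod] at hmapped
      calc fschur (q+1) lam
            (fun j : Fin (q+1) => a ((lam j : ℤ) + ((q+1:ℕ) : ℤ) - ((j:ℕ):ℤ))) a
          = ∏ i : Fin (q+1), φ (∏ j ∈ Finset.range (lam i),
              (MvPolynomial.X ((lam i : ℤ) + ((q+1:ℕ) : ℤ) - ((i:ℕ):ℤ))
                - MvPolynomial.X (((q+1:ℕ):ℤ)
                    - ((Finset.univ.filter (fun r : Fin (q+1) => j + 1 ≤ lam r)).card : ℤ)
                    + ((j:ℤ)+1)))) := hmapped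
        _ = _ := by
            apply Finset.prod_congr rfl
            intro i _
            rw [map_prod]
            apply Finset.prod_congr rfl
            intro j _
            rw [map_sub, hφX, hφX]
end
end
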